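/- Let π₁, π₂ : ℝ³ → ℝ be continuously differentiable functions, and write w(x) = π₁(x) + i·π₂(x). Then the following are equivalent: (i) for every pair of entire functions f, g : ℂ → ℂ, the spinor field φ = (φ₁, φ₂) : ℝ³ → ℂ² defined by φ₁(x) = f(π₁(x) + i·π₂(x)) and φ₂(x) = g(π₁(x) − i·π₂(x)) satisfies the Dirac equation D³φ = 0 on all of ℝ³, i.e. i·∂₃φ₁ + ∂₂φ₂ + i·∂₁φ₂ = 0 and −∂₂φ₁ + i·∂₁φ₁ − i·∂₃φ₂ = 0 everywhere; (ii) the identities ∂₁π₁ = ∂₂π₂, ∂₂π₁ = −∂₁π₂, ∂₃π₁ = 0 and ∂₃π₂ = 0 hold everywhere on ℝ³. -/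

import Mathlib

open Complex

/-- Partial derivative of a complex-valued function on `ℝ³` in the `j`-th
coordinate direction. -/
noncomputable def pd3 (j : Fin 3) (f : (Fin 3 → ℝ) → ℂ) (x : Fin 3 → ℝ) : ℂ :=
  fderiv ℝ f x (Pi.single j 1)

/-- Partial derivative of a real-valued function on `ℝ³` in the `j`-th
coordinate direction. -/
noncomputable def pd3R (j : Fin 3) (f : (Fin 3 → ℝ) → ℝ) (x : Fin 3 → ℝ) : ℝ :=
  fderiv ℝ f x (Pi.single j 1)

/-- A `C¹` map `π = (π₁, π₂) : ℝ³ → ℝ²` pulls back every harmonic spinor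
`(f(y₁+iy₂), g(y₁−iy₂))` on `ℝ²` to a harmonic spinor on `ℝ³` (kernel of the
Euclidean Dirac operator in the Pauli representation) if and only if
`∂₁π₁ = ∂₂π₂`, `∂₂π₁ = −∂₁π₂`, `∂₃π₁ = 0` and `∂₃π₂ = 0` everywhere. -/
lemma pd3_comp (f : ℂ → ℂ) (hf : Differentiable ℂ f) {π₁ π₂ : (Fin 3 → ℝ) → ℝ}
    (h₁ : Differentiable ℝ π₁) (h₂ : Differentiable ℝ π₂) (ε : ℂ) (j : Fin 3) (x : Fin 3 → ℝ) :
    pd3 j (fun y => f ((π₁ y : ℂ) + ε * (π₂ y : ℂ))) x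
      = deriv f ((π₁ x : ℂ) + ε * (π₂ x : ℂ))
        * ((pd3R j π₁ x : ℂ) + ε * (pd3R j π₂ x : ℂ)) := by
  have H1 : HasFDerivAt (fun y => (π₁ y : ℂ)) (Complex.ofRealCLM.comp (fderiv ℝ π₁ x)) x :=
    Complex.ofRealCLM.hasFDerivAt.comp x (h₁ x).hasFDerivAt
  have H2 : HasFDerivAt (fun y => (π₂ y : ℂ)) (Complex.ofRealCLM.comp (fderiv ℝ π₂ x)) x :=
    Complex.ofRealCLM.hasFDerivAt.comp x (h₂ x).hasFDerivAt
  have hw : HasFDerivAt (fun y => (π₁ y : ℂ) + ε * (π₂ y : ℂ))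
      (Complex.ofRealCLM.comp (fderiv ℝ π₁ x) + ε • Complex.ofRealCLM.comp (fderiv ℝ π₂ x)) x := by
    exact H1.add (H2.const_smul ε)
  have hfd : HasFDerivAt f
      ((ContinuousLinearMap.smulRight (1 : ℂ →L[ℂ] ℂ)
        (deriv f ((π₁ x : ℂ) + ε * (π₂ x : ℂ)))).restrictScalars ℝ)
      ((π₁ x : ℂ) + ε * (π₂ x : ℂ)) :=
    ((hf _).hasDerivAt.hasFDerivAt).restrictScalars ℝ
  have := (hfd.comp x hw).fderiv
  rw [pd3, show (fun y => f ((π₁ y : ℂ) + ε * (π₂ y : ℂ))) = (f ∘ fun y => (π₁ y : ℂ) + ε * (π₂ y : ℂ)) from rfl, this]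
  simp [pd3R, ContinuousLinearMap.comp_apply, ContinuousLinearMap.add_apply,
    ContinuousLinearMap.smul_apply, smul_eq_mul]
  ring
lemma pd3_compN (g : ℂ → ℂ) (hg : Differentiable ℂ g) {π₁ π₂ : (Fin 3 → ℝ) → ℝ}
    (h₁ : Differentiable ℝ π₁) (h₂ : Differentiable ℝ π₂) (j : Fin 3) (x : Fin 3 → ℝ) :
    pd3 j (fun y => g ((π₁ y : ℂ) - Complex.I * (π₂ y : ℂ))) x
      = deriv g ((π₁ x : ℂ) - Complex.I * (π₂ x : ℂ))
        * ((pd3R j π₁ x : ℂ) - Complex.I * (pd3R j π₂ x : ℂ)) := by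
  have e : (fun y => g ((π₁ y : ℂ) - Complex.I * (π₂ y : ℂ)))
      = (fun y => g ((π₁ y : ℂ) + (-Complex.I) * (π₂ y : ℂ))) := by
    funext y; congr 1; ring
  rw [e, pd3_comp g hg h₁ h₂ (-Complex.I) j x]
  congr 1
  · congr 1; ring
  · ring

theorem dirac_morphism_R3_R2
    (π₁ π₂ : (Fin 3 → ℝ) → ℝ)
    (h₁ : ContDiff ℝ 1 π₁) (h₂ : ContDiff ℝ 1 π₂) :
    (∀ f g : ℂ → ℂ, Differentiable ℂ f → Differentiable ℂ g →
      ∀ x : Fin 3 → ℝ,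
        (Complex.I * pd3 2 (fun y => f ((π₁ y : ℂ) + Complex.I * (π₂ y : ℂ))) x
            + pd3 1 (fun y => g ((π₁ y : ℂ) - Complex.I * (π₂ y : ℂ))) x
            + Complex.I * pd3 0 (fun y => g ((π₁ y : ℂ) - Complex.I * (π₂ y : ℂ))) x = 0)
        ∧
        (- pd3 1 (fun y => f ((π₁ y : ℂ) + Complex.I * (π₂ y : ℂ))) x
            + Complex.I * pd3 0 (fun y => f ((π₁ y : ℂ) + Complex.I * (π₂ y : ℂ))) x
            - Complex.I * pd3 2 (fun y => g ((π₁ y : ℂ) - Complex.I * (π₂ y : ℂ))) x = 0))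
    ↔
    (∀ x : Fin 3 → ℝ,
      pd3R 0 π₁ x = pd3R 1 π₂ x ∧
      pd3R 1 π₁ x = - pd3R 0 π₂ x ∧
      pd3R 2 π₁ x = 0 ∧
      pd3R 2 π₂ x = 0) := by
  have d₁ : Differentiable ℝ π₁ := h₁.differentiable one_ne_zero
  have d₂ : Differentiable ℝ π₂ := h₂.differentiable one_ne_zero
  constructor
  · intro h x
    obtain ⟨e1, e2⟩ := h id (fun _ => 0) differentiable_id (differentiable_const 0) x
    have hz : ∀ j : Fin 3, pd3 j (fun _ : Fin 3 → ℝ => (0 : ℂ)) x = 0 := fun j => by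
      simp [pd3]
    rw [pd3_comp id differentiable_id d₁ d₂ Complex.I 1 x,
        pd3_comp id differentiable_id d₁ d₂ Complex.I 0 x, hz 2] at e2
    rw [pd3_comp id differentiable_id d₁ d₂ Complex.I 2 x, hz 1, hz 0] at e1
    simp only [deriv_id', deriv_const', one_mul, zero_mul, add_zero, mul_zero,
      sub_zero, neg_add_eq_zero] at e1 e2
    rw [Complex.ext_iff] at e1 e2
    simp [Complex.add_re, Complex.add_im, Complex.mul_re, Complex.mul_im] at e1 e2
    refine ⟨?_, ?_, ?_, ?_⟩ <;> [skip; skip; exact e1.2; exact e1.1] <;> linarith [e2.1, e2.2]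
  · intro h f g hf hg x
    obtain ⟨ha, hb, hc, hd⟩ := h x
    constructor
    · rw [pd3_comp f hf d₁ d₂ Complex.I 2 x, pd3_compN g hg d₁ d₂ 1 x,
        pd3_compN g hg d₁ d₂ 0 x, ha, hb, hc, hd]
      push_cast
      ring_nf
      rw [Complex.I_sq]
      ring
    · rw [pd3_comp f hf d₁ d₂ Complex.I 1 x, pd3_comp f hf d₁ d₂ Complex.I 0 x,
        pd3_compN g hg d₁ d₂ 2 x, ha, hb, hc, hd]
      push_cast
      ring_nf
      rw [Complex.I_sq]
      ring
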